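/- Von Neumann's condition holds for the Banach-*-algebra quantization: $\lim_{\hbar \to 0} \|\mu \star_\hbar \nu - \mu \star_0 \nu\|_1 = 0$ for all finite complex Borel measures $\mu, \nu$ on $E$, where $\star_0$ is the ordinary convolution. -/

import Mathlib

open MeasureTheory Complex Filter

/-- A finite complex Borel measure, represented by its variation measure
together with a density of modulus one (polar decomposition). -/
structure CMeasure (E : Type*) [MeasurableSpace E] where
  var : MeasureTheory.Measure E
  finite : MeasureTheory.IsFiniteMeasure var
  density : E → ℂ
  meas_density : Measurable density
  norm_density : ∀ f, ‖density f‖ = 1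

namespace CMeasure

/-- The value `μ(Λ)` of the complex measure on a set `Λ`. -/
noncomputable def val {E : Type*} [MeasurableSpace E] (μ : CMeasure E) (Λ : Set E) : ℂ :=
  ∫ f in Λ, μ.density f ∂μ.var

/-- The integral `∫ a dμ` of a complex function against the complex measure. -/
noncomputable def integral {E : Type*} [MeasurableSpace E] (μ : CMeasure E) (a : E → ℂ) : ℂ :=
  ∫ f, a f * μ.density f ∂μ.var

/-- The total variation norm `‖μ‖₁ = |μ|(E)`. -/
noncomputable def norm1 {E : Type*} [MeasurableSpace E] (μ : CMeasure E) : ℝ :=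
  (μ.var Set.univ).toReal

end CMeasure

/-- The set of partial sums `∑ ‖φ(Λ_k)‖` over finite disjoint families of
measurable sets, whose supremum is the total variation norm of the set function `φ`. -/
def tvSet {E : Type*} [MeasurableSpace E] (φ : Set E → ℂ) : Set ℝ :=
  { r | ∃ (n : ℕ) (Λ : Fin n → Set E), (∀ i, MeasurableSet (Λ i)) ∧
      Pairwise (Function.onFun Disjoint Λ) ∧ r = ∑ i, ‖φ (Λ i)‖ }

/-- The total variation norm of a complex set function. -/
noncomputable def tvNorm {E : Type*} [MeasurableSpace E] (φ : Set E → ℂ) : ℝ :=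
  sSup (tvSet φ)

/-- Complex-valued indicator function of a set. -/
noncomputable def cind {E : Type*} (Λ : Set E) (h : E) : ℂ :=
  Set.indicator Λ (fun _ => (1 : ℂ)) h

/-- Twisted convolution `(μ ⋆_hb ν)(Λ) = ∫∫ e^{-(i/2)hbσ(f,g)} 1_Λ(f+g) dμ(f) dν(g)`,
as a set function. -/
noncomputable def twistVal {E : Type*} [MeasurableSpace E] [Add E]
    (σ : E → E → ℝ) (hb : ℝ) (μ ν : CMeasure E) (Λ : Set E) : ℂ :=
  μ.integral fun f => ν.integral fun g =>
    Complex.exp (-(Complex.I / 2) * (hb : ℂ) * (σ f g : ℂ)) * cind Λ (f + g)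

/-- Poisson bracket `{μ,ν}₀(Λ) = ∫∫ σ(f,g) 1_Λ(f+g) dμ(f) dν(g)`, as a set function. -/
noncomputable def pbVal {E : Type*} [MeasurableSpace E] [Add E]
    (σ : E → E → ℝ) (μ ν : CMeasure E) (Λ : Set E) : ℂ :=
  μ.integral fun f => ν.integral fun g => ((σ f g : ℝ) : ℂ) * cind Λ (f + g)

/-- von Neumann's condition in the measure Banach-*-algebras:
`lim_{ħ→0} ‖μ ⋆_ħ ν - μ ⋆_0 ν‖₁ = 0`, where `⋆_0` is the ordinary convolution. -/
private lemma norm_texp' (hb r : ℝ) : ‖Complex.exp (-(Complex.I / 2) * (hb:ℂ) * (r:ℂ))‖ = 1 := by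
  rw [Complex.norm_exp]; simp [Complex.div_re]

private lemma norm_cind_le' {E : Type*} (Λ : Set E) (x : E) : ‖cind Λ x‖ ≤ 1 := by
  unfold cind; by_cases h : x ∈ Λ <;> simp [h]

theorem von_neumann_condition_measures
    {E : Type*} [AddCommGroup E] [Module ℝ E] [MeasurableSpace E] [MeasurableAdd₂ E]
    (σ : E →ₗ[ℝ] E →ₗ[ℝ] ℝ) (hσ_anti : ∀ f g : E, σ f g = - σ g f)
    (hσ_meas : Measurable fun p : E × E => σ p.1 p.2)
    (μ ν : CMeasure E) :
    Filter.Tendsto (fun hb : ℝ =>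
        tvNorm (fun Λ : Set E =>
          twistVal (fun a b => σ a b) hb μ ν Λ - twistVal (fun a b => σ a b) 0 μ ν Λ))
      (nhds 0) (nhds 0) := by
  classical
  haveI : IsFiniteMeasure μ.var := μ.finite
  haveI : IsFiniteMeasure ν.var := ν.finite
  set σ' : E → E → ℝ := fun a b => σ a b with hσ'
  set φ : ℝ → Set E → ℂ := fun hb Λ =>
    twistVal σ' hb μ ν Λ - twistVal σ' 0 μ ν Λ with hφ
  set M := μ.var.prod ν.var with hM
  set w : ℝ → E × E → ℝ := fun hb p =>
    ‖Complex.exp (-(Complex.I/2) * (hb:ℂ) * (σ' p.1 p.2 : ℂ)) - 1‖ with hw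
  set G : ℝ → Set E → E × E → ℂ := fun hb Λ p =>
    Complex.exp (-(Complex.I/2) * (hb:ℂ) * (σ' p.1 p.2 : ℂ)) * cind Λ (p.1 + p.2) *
      (μ.density p.1 * ν.density p.2) with hG
  set K : ℝ → ℝ := fun hb => ∫ p, w hb p ∂M with hK
  have hexp_meas : ∀ hb : ℝ, Measurable fun p : E × E =>
      Complex.exp (-(Complex.I/2) * (hb:ℂ) * (σ' p.1 p.2 : ℂ)) := fun hb =>
    Complex.continuous_exp.measurable.comp
      ((Complex.measurable_ofReal.comp hσ_meas).const_mul (-(Complex.I/2) * hb))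
  have hdens_meas : Measurable fun p : E × E => μ.density p.1 * ν.density p.2 :=
    (μ.meas_density.comp measurable_fst).mul (ν.meas_density.comp measurable_snd)
  have hG_meas : ∀ (hb : ℝ) (Λ : Set E), MeasurableSet Λ → Measurable (G hb Λ) := by
    intro hb Λ hΛ
    exact ((hexp_meas hb).mul
      ((Measurable.indicator measurable_const hΛ).comp measurable_add)).mul hdens_meas
  have hG_bound : ∀ (hb : ℝ) (Λ : Set E) (p : E × E), ‖G hb Λ p‖ ≤ 1 := by
    intro hb Λ p
    simp only [hG, norm_mul, norm_texp', μ.norm_density, ν.norm_density]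
    simpa using norm_cind_le' Λ (p.1 + p.2)
  have hG_int : ∀ (hb : ℝ) (Λ : Set E), MeasurableSet Λ → Integrable (G hb Λ) M :=
    fun hb Λ hΛ => (integrable_const (1:ℝ)).mono'
      (hG_meas hb Λ hΛ).aestronglyMeasurable (.of_forall (hG_bound hb Λ))
  have htwist : ∀ (hb : ℝ) (Λ : Set E), MeasurableSet Λ →
      twistVal σ' hb μ ν Λ = ∫ p, G hb Λ p ∂M := by
    intro hb Λ hΛ
    rw [hM, integral_prod _ (hG_int hb Λ hΛ)]
    unfold twistVal CMeasure.integral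
    refine integral_congr_ae (.of_forall fun f => ?_)
    beta_reduce
    rw [← integral_mul_const]
    refine integral_congr_ae (.of_forall fun g => ?_)
    simp only [hG]; ring
  have hw_meas : ∀ hb : ℝ, Measurable (w hb) := fun hb =>
    ((hexp_meas hb).sub measurable_const).norm
  have hw_int : ∀ hb : ℝ, Integrable (w hb) M := by
    intro hb
    refine (integrable_const (2:ℝ)).mono' (hw_meas hb).aestronglyMeasurable (.of_forall fun p => ?_)
    simp only [hw, Real.norm_eq_abs, abs_norm]
    exact (norm_sub_le _ _).trans (by rw [norm_texp']; norm_num)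
  have hkey : ∀ (hb : ℝ) (Λ : Set E), MeasurableSet Λ →
      ‖φ hb Λ‖ ≤ ∫ p in (fun p : E × E => p.1 + p.2) ⁻¹' Λ, w hb p ∂M := by
    intro hb Λ hΛ
    have h1 : ∀ p : E × E, G hb Λ p - G 0 Λ p =
        (Complex.exp (-(Complex.I/2)*(hb:ℂ)*(σ' p.1 p.2:ℂ)) - 1) * cind Λ (p.1+p.2) *
          (μ.density p.1 * ν.density p.2) := by
      intro p
      simp only [hG, Complex.ofReal_zero, mul_zero, zero_mul, Complex.exp_zero]
      ring
    have h2 : φ hb Λ = ∫ p, (G hb Λ p - G 0 Λ p) ∂M := by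
      rw [hφ]
      simp only
      rw [htwist hb Λ hΛ, htwist 0 Λ hΛ, integral_sub (hG_int hb Λ hΛ) (hG_int 0 Λ hΛ)]
    rw [h2]
    calc ‖∫ p, (G hb Λ p - G 0 Λ p) ∂M‖ ≤ ∫ p, ‖G hb Λ p - G 0 Λ p‖ ∂M :=
          norm_integral_le_integral_norm _
      _ = ∫ p, Set.indicator ((fun p : E × E => p.1 + p.2) ⁻¹' Λ) (w hb) p ∂M := by
          refine integral_congr_ae (.of_forall fun p => ?_)
          show ‖G hb Λ p - G 0 Λ p‖ = _
          rw [h1]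
          by_cases hp : p.1 + p.2 ∈ Λ
          · simp [Set.indicator_of_mem, hp, Set.mem_preimage, cind, hw, norm_mul,
              μ.norm_density, ν.norm_density]
          · simp [cind, hp, Set.mem_preimage, hw]
      _ = _ := integral_indicator (measurable_add hΛ)
  have hKb : ∀ hb : ℝ, ∀ r ∈ tvSet (φ hb), r ≤ K hb := by
    rintro hb r ⟨k, Λ, hΛm, hΛd, rfl⟩
    set S : Fin k → Set (E × E) := fun i => (fun p : E × E => p.1 + p.2) ⁻¹' (Λ i) with hS
    have hSm : ∀ i, MeasurableSet (S i) := fun i => measurable_add (hΛm i)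
    have hSd : Pairwise (Function.onFun Disjoint S) := fun i j hij =>
      Disjoint.preimage _ (hΛd hij)
    calc ∑ i, ‖φ hb (Λ i)‖ ≤ ∑ i, ∫ p in S i, w hb p ∂M :=
          Finset.sum_le_sum fun i _ => hkey hb (Λ i) (hΛm i)
      _ = ∫ p in ⋃ i ∈ Finset.univ, S i, w hb p ∂M :=
          (integral_biUnion_finset Finset.univ (fun i _ => hSm i)
            (hSd.set_pairwise _) (fun i _ => (hw_int hb).integrableOn)).symm
      _ ≤ K hb := setIntegral_le_integral (hw_int hb) (.of_forall fun p => norm_nonneg _)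
  have h0mem : ∀ hb : ℝ, (0:ℝ) ∈ tvSet (φ hb) := by
    intro hb
    exact ⟨0, fun i => i.elim0, fun i => i.elim0, fun i => i.elim0, by simp⟩
  have hbdd : ∀ hb : ℝ, BddAbove (tvSet (φ hb)) := fun hb => ⟨K hb, fun r hr => hKb hb r hr⟩
  have hlb : ∀ hb : ℝ, 0 ≤ tvNorm (φ hb) := fun hb => le_csSup (hbdd hb) (h0mem hb)
  have hub : ∀ hb : ℝ, tvNorm (φ hb) ≤ K hb := fun hb => csSup_le ⟨0, h0mem hb⟩ (hKb hb)
  have hKt : Tendsto K (nhds 0) (nhds 0) := by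
    have h := tendsto_integral_filter_of_dominated_convergence (μ := M)
      (F := fun hb => w hb) (f := fun _ => (0:ℝ)) (l := nhds 0) (fun _ => (2:ℝ))
      (.of_forall fun hb => (hw_meas hb).aestronglyMeasurable)
      (.of_forall fun hb => .of_forall fun p => by
        simp only [hw, Real.norm_eq_abs, abs_norm]
        exact (norm_sub_le _ _).trans (by rw [norm_texp']; norm_num))
      (integrable_const 2)
      (.of_forall fun p => by
        have hc : Continuous fun hb : ℝ =>
            ‖Complex.exp (-(Complex.I/2)*(hb:ℂ)*(σ' p.1 p.2:ℂ)) - 1‖ := by fun_prop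
        have h := hc.tendsto 0
        simp only [hw]
        simpa only [Complex.ofReal_zero, mul_zero, zero_mul, Complex.exp_zero, sub_self,
          norm_zero] using h)
    simpa using h
  exact tendsto_of_tendsto_of_tendsto_of_le_of_le tendsto_const_nhds hKt hlb hub
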